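/- Let A: Θ → ℝ be twice continuously differentiable on an open interval Θ ⊆ ℝ with A' > 0 and A'' > 0 on Θ, and suppose A'(v) ≤ κ A''(v) for all v ∈ Θ for some κ > 0. Then for all θ' < θ in Θ, with δ = (θ − θ')/2: (A(θ) + A(θ'))/2 − A((θ+θ')/2) ≤ 2κ (√(A'(θ)) − √(A'(θ')))². -/

import Mathlib

lemma mono_aux12 {f f' : ℝ → ℝ} {s : Set ℝ} {p q : ℝ}
    (hpq : p ≤ q) (hsub : Set.Icc p q ⊆ s)
    (hf : ∀ x ∈ s, HasDerivAt f (f' x) x)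
    (h0 : ∀ x ∈ s, 0 ≤ f' x) : f p ≤ f q := by
  have hcont : ContinuousOn f (Set.Icc p q) := fun x hx =>
    ((hf x (hsub hx)).continuousAt).continuousWithinAt
  have := monotoneOn_of_hasDerivWithinAt_nonneg (convex_Icc p q) hcont
    (fun x hx => ((hf x (hsub (interior_subset hx))).hasDerivWithinAt))
    (fun x hx => h0 x (hsub (interior_subset hx)))
  exact this (Set.left_mem_Icc.2 hpq) (Set.right_mem_Icc.2 hpq) hpq


lemma arith_small12 {κ s a b x y L : ℝ} (hκ : 0 < κ) (hs : 0 < s) (hs1 : s ≤ 1)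
    (hx : 0 < x) (hy : 0 < y) (hxq : x ^ 2 = a) (hyq : y ^ 2 = b)
    (hE : y * (1 + s / 2) ^ 2 ≤ x)
    (hL : L ≤ κ * (s * (a - b)) / 2) : L ≤ 2 * κ * (x - y) ^ 2 := by
  have hxy0 : 0 ≤ x - y := by nlinarith [mul_pos hy hs, mul_nonneg hy.le (sq_nonneg s)]
  have hkey : s * (x + y) ≤ 4 * (x - y) := by nlinarith [sq_nonneg s, mul_pos hy hs]
  have hmain : s * (a - b) ≤ 4 * (x - y) ^ 2 := by
    nlinarith [mul_le_mul_of_nonneg_left hkey hxy0]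
  nlinarith [mul_le_mul_of_nonneg_left hmain hκ.le]

lemma arith_large12 {κ a c x y L : ℝ} (hκ : 0 < κ) (hc : 0 < c)
    (hy : 0 ≤ y) (hxq : x ^ 2 = a) (h2y : 2 * y ≤ x)
    (hL : L ≤ κ * (a - c) / 2) : L ≤ 2 * κ * (x - y) ^ 2 := by
  have h1 : a - c ≤ 4 * (x - y) ^ 2 := by nlinarith
  nlinarith [mul_le_mul_of_nonneg_left h1 hκ.le]

theorem stmt_12 (Θ : Set ℝ) (hΘopen : IsOpen Θ) (hΘconn : Θ.OrdConnected)
    (A A' A'' : ℝ → ℝ)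
    (hA' : ∀ x ∈ Θ, HasDerivAt A (A' x) x)
    (hA'' : ∀ x ∈ Θ, HasDerivAt A' (A'' x) x)
    (hA''cont : ContinuousOn A'' Θ)
    (hA'pos : ∀ x ∈ Θ, 0 < A' x) (hA''pos : ∀ x ∈ Θ, 0 < A'' x)
    (κ : ℝ) (hκ : 0 < κ) (hdom : ∀ x ∈ Θ, A' x ≤ κ * A'' x)
    (θ θ' : ℝ) (hθ : θ ∈ Θ) (hθ' : θ' ∈ Θ) (hlt : θ' < θ) :
    (A θ + A θ') / 2 - A ((θ + θ') / 2)
      ≤ 2 * κ * (Real.sqrt (A' θ) - Real.sqrt (A' θ'))^2 := by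
  set m : ℝ := (θ + θ') / 2 with hm_def
  have hIcc : Set.Icc θ' θ ⊆ Θ := hΘconn.out hθ' hθ
  have hm1 : θ' ≤ m := by simp only [hm_def]; linarith
  have hm2 : m ≤ θ := by simp only [hm_def]; linarith
  have hm : m ∈ Θ := hIcc ⟨hm1, hm2⟩
  have hIcc1 : Set.Icc θ' m ⊆ Θ := fun x hx => hIcc ⟨hx.1, hx.2.trans hm2⟩
  have hIcc2 : Set.Icc m θ ⊆ Θ := fun x hx => hIcc ⟨hm1.trans hx.1, hx.2⟩
  set δ : ℝ := (θ - θ') / 2 with hδ_def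
  have hδpos : 0 < δ := by simp only [hδ_def]; linarith
  set s : ℝ := δ / κ with hs_def
  have hspos : 0 < s := div_pos hδpos hκ
  set a := A' θ with ha_def
  set b := A' θ' with hb_def
  set c := A' m with hc_def
  have hapos : 0 < a := hA'pos θ hθ
  have hbpos : 0 < b := hA'pos θ' hθ'
  have hcpos : 0 < c := hA'pos m hm
  -- A' is monotone on Θ-subintervals
  have hA'mono : ∀ x ∈ Set.Icc θ' θ, ∀ y ∈ Set.Icc θ' θ, x ≤ y → A' x ≤ A' y := by
    intro x hx y hy hxy
    have hsub : Set.Icc x y ⊆ Θ := fun z hz => hIcc ⟨hx.1.trans hz.1, hz.2.trans hy.2⟩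
    exact mono_aux12 hxy hsub (fun z hz => hA'' z hz) (fun z hz => (hA''pos z hz).le)
  -- L1 : A θ - A m ≤ κ * (a - c)
  have hL1 : A θ - A m ≤ κ * (a - c) := by
    have := mono_aux12 hm2 hIcc2 (f := fun x => κ * A' x - A x)
      (f' := fun x => κ * A'' x - A' x)
      (fun x hx => by exact ((hA'' x hx).const_mul κ).sub (hA' x hx))
      (fun x hx => by have := hdom x hx; show (0:ℝ) ≤ κ * A'' x - A' x; linarith)
    try simp only at this
    linarith
  -- L2 : A θ - A m ≤ δ * a
  have hL2 : A θ - A m ≤ δ * a := by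
    have := mono_aux12 hm2 (Set.Subset.refl _) (f := fun x => a * x - A x)
      (f' := fun x => a - A' x)
      (fun x hx => by simpa using (show HasDerivAt (fun y => a * y - A y) (a * 1 - A' x) x from ((hasDerivAt_id x).const_mul a).sub (hA' x (hIcc2 hx))))
      (fun x hx => by
        have := hA'mono x ⟨hm1.trans hx.1, hx.2⟩ θ ⟨hlt.le, le_refl θ⟩ hx.2
        exact sub_nonneg.2 this)
    try simp only at this
    have : a * m - A m ≤ a * θ - A θ := this
    have hma : a * θ - a * m = δ * a := by simp only [hm_def, hδ_def]; ring
    linarith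
  -- L3 : δ * b ≤ A m - A θ'
  have hL3 : δ * b ≤ A m - A θ' := by
    have := mono_aux12 hm1 (Set.Subset.refl _) (f := fun x => A x - b * x)
      (f' := fun x => A' x - b)
      (fun x hx => by simpa using (show HasDerivAt (fun y => A y - b * y) (A' x - b * 1) x from (hA' x (hIcc1 hx)).sub ((hasDerivAt_id x).const_mul b)))
      (fun x hx => by
        have := hA'mono θ' ⟨le_refl _, hlt.le⟩ x ⟨hx.1, hx.2.trans hm2⟩ hx.1
        exact sub_nonneg.2 this)
    try simp only at this
    have hmc : b * m - b * θ' = δ * b := by simp only [hm_def, hδ_def]; ring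
    linarith
  -- log bounds
  have hlog : ∀ p q : ℝ, p ∈ Set.Icc θ' θ → q ∈ Set.Icc θ' θ → p ≤ q →
      Real.log (A' p) - p / κ ≤ Real.log (A' q) - q / κ := by
    intro p q hp hq hpq
    have hsub : Set.Icc p q ⊆ Θ := fun z hz => hIcc ⟨hp.1.trans hz.1, hz.2.trans hq.2⟩
    exact mono_aux12 hpq hsub (f := fun x => Real.log (A' x) - x / κ)
      (f' := fun x => A'' x / A' x - 1 / κ)
      (fun x hx => by
        have h1 : HasDerivAt (fun x => Real.log (A' x)) ((A' x)⁻¹ * A'' x) x :=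
          (Real.hasDerivAt_log (hA'pos x hx).ne').comp x (hA'' x hx)
        have h2 : HasDerivAt (fun x => Real.log (A' x) - x / κ) _ x := h1.sub ((hasDerivAt_id x).div_const κ)
        convert h2 using 1
        · rw [div_eq_inv_mul])
      (fun x hx => by
        have h1 := hdom x hx
        have h2 := hA'pos x hx
        show (0:ℝ) ≤ A'' x / A' x - 1 / κ
        rw [sub_nonneg, div_le_div_iff₀ hκ h2]
        linarith)
  have hlog1 : Real.log b + s ≤ Real.log c := by
    have := hlog θ' m ⟨le_refl _, hlt.le⟩ ⟨hm1, hm2⟩ hm1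
    have hms : m / κ - θ' / κ = s := by
      simp only [hm_def, hs_def, hδ_def]; ring
    simp only [← ha_def, ← hb_def, ← hc_def] at this
    linarith
  have hlog2 : Real.log c + s ≤ Real.log a := by
    have := hlog m θ ⟨hm1, hm2⟩ ⟨hlt.le, le_refl _⟩ hm2
    have hms : θ / κ - m / κ = s := by
      simp only [hm_def, hs_def, hδ_def]; ring
    linarith
  have hcb : b * Real.exp s ≤ c := by
    have : Real.exp (Real.log b + s) ≤ Real.exp (Real.log c) := Real.exp_le_exp.2 hlog1
    rwa [Real.exp_add, Real.exp_log hbpos, Real.exp_log hcpos] at this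
  have hac : c * Real.exp s ≤ a := by
    have : Real.exp (Real.log c + s) ≤ Real.exp (Real.log a) := Real.exp_le_exp.2 hlog2
    rwa [Real.exp_add, Real.exp_log hcpos, Real.exp_log hapos] at this
  set x := Real.sqrt a with hx_def
  set y := Real.sqrt b with hy_def
  have hxsq : x ^ 2 = a := Real.sq_sqrt hapos.le
  have hysq : y ^ 2 = b := Real.sq_sqrt hbpos.le
  have hxpos : 0 < x := Real.sqrt_pos.2 hapos
  have hypos : 0 < y := Real.sqrt_pos.2 hbpos
  have hexp_pos : 0 < Real.exp s := Real.exp_pos s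
  have hab : b * Real.exp s * Real.exp s ≤ a := by
    calc b * Real.exp s * Real.exp s ≤ c * Real.exp s :=
      mul_le_mul_of_nonneg_right hcb hexp_pos.le
    _ ≤ a := hac
  have hxy : y * Real.exp s ≤ x := by
    rw [hx_def]
    rw [Real.le_sqrt (by positivity) hapos.le]
    calc (y * Real.exp s) ^ 2 = b * Real.exp s * Real.exp s := by rw [← hysq]; ring
    _ ≤ a := hab
  have hexp_ge : 1 + s ≤ Real.exp s := by linarith [Real.add_one_le_exp s]
  have hδκ : δ = κ * s := by rw [hs_def]; field_simp
  rcases le_or_gt s 1 with hs1 | hs1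
  · -- small s case
    have hexp_half : (1 + s / 2) ^ 2 ≤ Real.exp s := by
      have h : 1 + s / 2 ≤ Real.exp (s / 2) := by linarith [Real.add_one_le_exp (s / 2)]
      calc (1 + s / 2) ^ 2 ≤ (Real.exp (s / 2)) ^ 2 :=
        pow_le_pow_left₀ (by positivity) h 2
      _ = Real.exp s := by rw [sq, ← Real.exp_add]; ring_nf
    have hE : y * (1 + s / 2) ^ 2 ≤ x :=
      le_trans (mul_le_mul_of_nonneg_left hexp_half hypos.le) hxy
    have heq : δ * (a - b) = κ * (s * (a - b)) := by rw [hδκ]; ring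
    have hL : (A θ + A θ') / 2 - A m ≤ κ * (s * (a - b)) / 2 := by linarith
    exact arith_small12 hκ hspos hs1 hxpos hypos hxsq hysq hE hL
  · -- large s case
    have he2 : (2 : ℝ) ≤ Real.exp 1 := by linarith [Real.add_one_le_exp 1]
    have hes : Real.exp 1 ≤ Real.exp s := Real.exp_le_exp.2 hs1.le
    have h2y : 2 * y ≤ x := by
      have h1 : (2:ℝ) ≤ Real.exp s := le_trans he2 hes
      have := mul_le_mul_of_nonneg_left h1 hypos.le
      linarith [hxy]
    have hδb : 0 ≤ δ * b := by positivity
    have hL : (A θ + A θ') / 2 - A m ≤ κ * (a - c) / 2 := by linarith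
    exact arith_large12 hκ hcpos hypos.le hxsq h2y hL
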